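/- Let G be a countably infinite group. If sequences of subsets Agₙ → B and A'gₙ → B' converge pointwise (indicator functions converge pointwise), and A ≈ A', then B ≈ B'. -/

import Mathlib

open scoped Pointwise

def Bdd {G : Type*} [Group G] (A B : Set G) : Prop :=
  ∃ F : Finset G, A ⊆ (F : Set G) * B

def EquivBdd {G : Type*} [Group G] (A B : Set G) : Prop :=
  Bdd A B ∧ Bdd B A

/-- Pointwise convergence of (indicators of) a sequence of subsets of `G`. -/
def ConvSets {G : Type*} (C : ℕ → Set G) (L : Set G) : Prop :=
  ∀ x : G, ∀ᶠ n in Filter.atTop, (x ∈ C n ↔ x ∈ L)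

lemma bdd_key {G : Type*} [Group G] (A A' B B' : Set G) (g : ℕ → G)
    (h1 : ConvSets (fun n => (· * g n) '' A) B)
    (h2 : ConvSets (fun n => (· * g n) '' A') B')
    (h : Bdd A A') : Bdd B B' := by
  obtain ⟨F, hF⟩ := h
  refine ⟨F, fun x hx => ?_⟩
  have hev : ∀ᶠ n in Filter.atTop, ∃ f ∈ F, (f⁻¹ * x) ∈ (· * g n) '' A' := by
    filter_upwards [h1 x] with n hn
    have hxA : x * (g n)⁻¹ ∈ A := by
      obtain ⟨a, ha, heq⟩ := hn.mpr hx
      simp only at heq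
      rw [← heq, mul_inv_cancel_right]
      exact ha
    have := hF hxA
    rw [Set.mem_mul] at this
    obtain ⟨f, hf, a', ha', heq⟩ := this
    refine ⟨f, hf, a', ha', ?_⟩
    simp only
    have : f⁻¹ * (x * (g n)⁻¹) = a' := by rw [← heq]; group
    rw [← this]; group
  have hpig : ∃ f ∈ F, ∃ᶠ n in Filter.atTop, (f⁻¹ * x) ∈ (· * g n) '' A' := by
    by_contra hcon
    push_neg at hcon
    have hall : ∀ᶠ n in Filter.atTop, ∀ f ∈ F, (f⁻¹ * x) ∉ (· * g n) '' A' := by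
      rw [Filter.eventually_all_finset]
      intro f hf
      exact hcon f hf
    obtain ⟨n, hn1, hn2⟩ := (hev.and hall).exists
    obtain ⟨f, hf, hmem⟩ := hn1
    exact hn2 f hf hmem
  obtain ⟨f, hf, hfreq⟩ := hpig
  obtain ⟨n, hn1, hn2⟩ := (hfreq.and_eventually (h2 (f⁻¹ * x))).exists
  have hB' : f⁻¹ * x ∈ B' := hn2.mp hn1
  rw [Set.mem_mul]
  exact ⟨f, hf, f⁻¹ * x, hB', by group⟩

theorem stmt16 {G : Type*} [Group G] [Countable G] [Infinite G]
    (A A' B B' : Set G) (g : ℕ → G)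
    (h1 : ConvSets (fun n => (· * g n) '' A) B)
    (h2 : ConvSets (fun n => (· * g n) '' A') B')
    (hAA' : EquivBdd A A') : EquivBdd B B' := by
  exact ⟨bdd_key A A' B B' g h1 h2 hAA'.1, bdd_key A' A B' B g h2 h1 hAA'.2⟩
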